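/- Let F be a finite set of real numbers with F ⊆ (0,1] and let S be a nonempty set of real numbers such that every element of S is either 0 or equals the product of some finite list of elements of F. Then S has a greatest element: there exists m ∈ S with x ≤ m for all x ∈ S; in particular the supremum of S is attained. -/

import Mathlib

/-- A nonempty set of reals, each of which is 0 or a product of a finite list
of elements of a finite set `F ⊆ (0,1]`, has a greatest element; in particular
its supremum is attained. -/
theorem stmt_1 (F : Finset ℝ) (hF : ∀ x ∈ F, 0 < x ∧ x ≤ 1) (S : Set ℝ)
    (hS : S.Nonempty)
    (hprod : ∀ x ∈ S, x = 0 ∨ ∃ l : List ℝ, (∀ y ∈ l, y ∈ F) ∧ x = l.prod) :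
    ∃ m ∈ S, (∀ x ∈ S, x ≤ m) ∧ sSup S = m := by
  classical
  -- case: S has a positive element or not
  by_cases hpos : ∃ p ∈ S, 0 < p
  · obtain ⟨p, hpS, hp⟩ := hpos
    -- choose N with f^N < p for all f ∈ F with f < 1
    have hN : ∃ N : ℕ, ∀ f ∈ F, f < 1 → f ^ N < p := by
      have : ∀ f ∈ F, ∃ n : ℕ, f < 1 → f ^ n < p := by
        intro f hf
        by_cases hf1 : f < 1
        · obtain ⟨n, hn⟩ := exists_pow_lt_of_lt_one hp hf1
          exact ⟨n, fun _ => hn⟩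
        · exact ⟨0, fun h => absurd h hf1⟩
      choose n hn using this
      refine ⟨(F.attach.sup fun f => n f f.2), fun f hf hf1 => ?_⟩
      calc f ^ (F.attach.sup fun g => n g g.2) ≤ f ^ n f hf := by
            apply pow_le_pow_of_le_one (hF f hf).1.le (hF f hf).2
            exact Finset.le_sup (f := fun (g : {x // x ∈ F}) => n g g.2) (Finset.mem_attach F ⟨f, hf⟩)
        _ < p := hn f hf hf1
    obtain ⟨N, hNlt⟩ := hN
    -- key: every x ∈ S with p ≤ x is a product with bounded exponents
    set g : (F → Fin (N + 1)) → ℝ := fun e => ∏ f ∈ F.attach, (f : ℝ) ^ (e f : ℕ) with hg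
    have key : ∀ x ∈ S, p ≤ x → x ∈ Set.range g := by
      intro x hxS hpx
      rcases hprod x hxS with rfl | ⟨l, hl, rfl⟩
      · linarith
      -- all counts of f < 1 are ≤ N
      have hsub : l.toFinset ⊆ F := fun y hy => hl y (List.mem_toFinset.mp hy)
      have hxeq : l.prod = ∏ f ∈ F, f ^ l.count f :=
        Finset.prod_list_count_of_subset l F hsub
      have hcnt : ∀ f ∈ F, f < 1 → l.count f ≤ N := by
        intro f hf hf1
        by_contra hc
        push_neg at hc
        have h1 : l.prod ≤ f ^ l.count f := by
          rw [hxeq, ← Finset.prod_erase_mul F _ hf]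
          have : ∏ g ∈ F.erase f, g ^ l.count g ≤ 1 := by
            apply Finset.prod_le_one
            · intro i hi
              exact pow_nonneg (hF i (Finset.mem_of_mem_erase hi)).1.le _
            · intro i hi
              exact pow_le_one₀ (hF i (Finset.mem_of_mem_erase hi)).1.le
                (hF i (Finset.mem_of_mem_erase hi)).2
          calc (∏ g ∈ F.erase f, g ^ l.count g) * f ^ l.count f
              ≤ 1 * f ^ l.count f := by
                apply mul_le_mul_of_nonneg_right this
                  (pow_nonneg (hF f hf).1.le _)
            _ = f ^ l.count f := one_mul _
        have h2 : f ^ l.count f ≤ f ^ N := by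
          apply pow_le_pow_of_le_one (hF f hf).1.le (hF f hf).2 (le_of_lt hc)
        have := hNlt f hf hf1
        linarith
      -- define exponents
      refine ⟨fun f => if h1 : (f : ℝ) = 1 then 0 else
        ⟨l.count (f : ℝ), Nat.lt_succ_of_le (hcnt f f.2 (lt_of_le_of_ne (hF f f.2).2 h1))⟩, ?_⟩
      rw [hg]
      simp only
      rw [hxeq, ← Finset.prod_attach F (fun f => f ^ l.count f)]
      apply Finset.prod_congr rfl
      intro f _
      by_cases h1 : (f : ℝ) = 1
      · simp [h1]
      · simp [h1]
    -- T = S ∩ [p, ∞) is finite and nonempty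
    have hTfin : (S ∩ {x | p ≤ x}).Finite := by
      apply Set.Finite.subset (Set.finite_range g)
      rintro x ⟨hxS, hx⟩
      exact key x hxS hx
    have hTne : (S ∩ {x | p ≤ x}).Nonempty := ⟨p, hpS, le_refl p⟩
    obtain ⟨m, hmT, hm⟩ := hTfin.exists_maximalFor id _ hTne
    have hmax : ∀ x ∈ S, x ≤ m := by
      intro x hx
      by_cases hxp : p ≤ x
      · by_contra hlt
        push_neg at hlt
        have := hm (j := x) ⟨hx, hxp⟩ (le_of_lt hlt)
        simp only [id] at this
        linarith [this]
      · push_neg at hxp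
        exact le_trans hxp.le hmT.2
    exact ⟨m, hmT.1, hmax, IsGreatest.csSup_eq ⟨hmT.1, hmax⟩⟩
  · push_neg at hpos
    have hzero : ∀ x ∈ S, x = 0 := by
      intro x hx
      rcases hprod x hx with h | ⟨l, hl, rfl⟩
      · exact h
      · exfalso
        have : 0 < l.prod := List.prod_pos (fun y hy => (hF y (hl y hy)).1)
        linarith [hpos l.prod hx]
    obtain ⟨x0, hx0⟩ := hS
    have hx0' := hzero x0 hx0
    have hb : ∀ x ∈ S, x ≤ x0 := fun x hx => by rw [hzero x hx, hx0']
    exact ⟨x0, hx0, hb, IsGreatest.csSup_eq ⟨hx0, hb⟩⟩
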